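/- Let g ≥ 1 and let M ∈ Sp(2g,ℝ) satisfy τ(M)·M = I_{2g}. Then there exists h ∈ Sp(2g,ℝ) such that M = τ(h)·h⁻¹. (Equivalently, the first nonabelian cohomology H¹(⟨τ⟩, Sp(2g,ℝ)) is trivial, where the group ⟨τ⟩ of order two acts on Sp(2g,ℝ) by τ.) -/

import Mathlib

open Matrix

/-- The symplectic matrix `J_g = (0 I; -I 0)` over `ℝ`. -/
def Jmat (g : ℕ) : Matrix (Fin g ⊕ Fin g) (Fin g ⊕ Fin g) ℝ := fromBlocks 0 1 (-1) 0

/-- The matrix `I_* = (-I 0; 0 I)` over `ℝ`. -/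
def Istar (g : ℕ) : Matrix (Fin g ⊕ Fin g) (Fin g ⊕ Fin g) ℝ := fromBlocks (-1) 0 0 1

/-- The involution `τ(x) = I_* x I_*`. -/
def tauInv (g : ℕ) (x : Matrix (Fin g ⊕ Fin g) (Fin g ⊕ Fin g) ℝ) :
    Matrix (Fin g ⊕ Fin g) (Fin g ⊕ Fin g) ℝ := Istar g * x * Istar g

open LinearMap

lemma finrank_range_eq_trace {g : ℕ} (p : Matrix (Fin g ⊕ Fin g) (Fin g ⊕ Fin g) ℝ)
    (hp : p * p = p) :
    (Module.finrank ℝ (LinearMap.range p.mulVecLin) : ℝ) = Matrix.trace p := by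
  have hproj : IsProj (LinearMap.range p.mulVecLin) p.mulVecLin := by
    constructor
    · intro x; exact LinearMap.mem_range_self _ x
    · rintro x ⟨y, rfl⟩
      have h := congrArg Matrix.mulVecLin hp
      rw [Matrix.mulVecLin_mul] at h
      exact congrFun (congrArg DFunLike.coe h) y
  have ht := hproj.trace
  rw [LinearMap.trace_eq_matrix_trace ℝ (Pi.basisFun ℝ (Fin g ⊕ Fin g)),
    LinearMap.toMatrix_eq_toMatrix'] at ht
  rw [← ht]
  congr 1
  rw [← Matrix.toLin'_apply', LinearMap.toMatrix'_toLin']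

lemma exists_h0 (g : ℕ) (A : Matrix (Fin g ⊕ Fin g) (Fin g ⊕ Fin g) ℝ)
    (hA2 : A * A = 1) (htr : Matrix.trace A = 0) :
    ∃ h₀ : Matrix (Fin g ⊕ Fin g) (Fin g ⊕ Fin g) ℝ,
      IsUnit h₀ ∧ A * h₀ = h₀ * Istar g := by
  set p : Matrix (Fin g ⊕ Fin g) (Fin g ⊕ Fin g) ℝ := (2⁻¹ : ℝ) • (1 - A) with hpdef
  set q : Matrix (Fin g ⊕ Fin g) (Fin g ⊕ Fin g) ℝ := (2⁻¹ : ℝ) • (1 + A) with hqdef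
  have hpq1 : p + q = 1 := by
    rw [hpdef, hqdef, ← smul_add]
    have : (1 - A) + (1 + A) = (2:ℝ) • 1 := by rw [two_smul]; abel
    rw [this, smul_smul]
    norm_num
  have hpp : p * p = p := by
    rw [hpdef, Matrix.smul_mul, Matrix.mul_smul, smul_smul]
    have : (1 - A) * (1 - A) = (2:ℝ) • (1 - A) := by
      simp only [sub_mul, mul_sub, one_mul, mul_one, hA2, two_smul, smul_sub]
      abel
    rw [this, smul_smul]; norm_num
  have hqq : q * q = q := by
    rw [hqdef, Matrix.smul_mul, Matrix.mul_smul, smul_smul]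
    have : (1 + A) * (1 + A) = (2:ℝ) • (1 + A) := by
      simp only [add_mul, mul_add, one_mul, mul_one, hA2, two_smul, smul_add]
      abel
    rw [this, smul_smul]; norm_num
  have hpq : p * q = 0 := by
    rw [hpdef, hqdef, Matrix.smul_mul, Matrix.mul_smul, smul_smul]
    have : (1 - A) * (1 + A) = 0 := by
      simp only [sub_mul, mul_add, one_mul, mul_one, hA2]
      abel
    rw [this, smul_zero]
  have hAp : A * p = -p := by
    rw [hpdef, Matrix.mul_smul, mul_sub, mul_one, hA2, ← smul_neg]
    congr 1
    abel
  have hAq : A * q = q := by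
    rw [hqdef, Matrix.mul_smul, mul_add, mul_one, hA2]
    congr 1; abel
  -- traces
  have hcard : (Fintype.card (Fin g ⊕ Fin g) : ℝ) = 2 * g := by
    simp [Fintype.card_sum]; ring
  have htrp : Matrix.trace p = (g : ℝ) := by
    rw [hpdef, Matrix.trace_smul, Matrix.trace_sub, Matrix.trace_one, htr, hcard]
    simp
  have htrq : Matrix.trace q = (g : ℝ) := by
    rw [hqdef, Matrix.trace_smul, Matrix.trace_add, Matrix.trace_one, htr, hcard]
    simp
  set Vm := LinearMap.range p.mulVecLin with hVmdef
  set Vp := LinearMap.range q.mulVecLin with hVpdef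
  have hfm : Module.finrank ℝ Vm = g := by
    have := finrank_range_eq_trace p hpp
    rw [htrp] at this; exact_mod_cast this
  have hfp : Module.finrank ℝ Vp = g := by
    have := finrank_range_eq_trace q hqq
    rw [htrq] at this; exact_mod_cast this
  -- IsCompl
  have hproj : IsProj Vm p.mulVecLin := by
    constructor
    · intro x; exact LinearMap.mem_range_self _ x
    · rintro x ⟨y, rfl⟩
      have h := congrArg Matrix.mulVecLin hpp
      rw [Matrix.mulVecLin_mul] at h
      exact congrFun (congrArg DFunLike.coe h) y
  have hker : LinearMap.ker p.mulVecLin = Vp := by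
    apply le_antisymm
    · intro x hx
      have hx' : p.mulVecLin x = 0 := hx
      refine ⟨x, ?_⟩
      have := congrFun (congrArg DFunLike.coe (congrArg Matrix.mulVecLin hpq1)) x
      rw [Matrix.mulVecLin_add, Matrix.mulVecLin_one] at this
      simpa [hx'] using this
    · rintro x ⟨y, rfl⟩
      have h := congrArg Matrix.mulVecLin hpq
      rw [Matrix.mulVecLin_mul, Matrix.mulVecLin_zero] at h
      exact congrFun (congrArg DFunLike.coe h) y
  have hcompl : IsCompl Vm Vp := hker ▸ hproj.isCompl
  -- bases
  let b₁ : Module.Basis (Fin g) ℝ Vm := Module.finBasisOfFinrankEq ℝ Vm hfm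
  let b₂ : Module.Basis (Fin g) ℝ Vp := Module.finBasisOfFinrankEq ℝ Vp hfp
  let b : Module.Basis (Fin g ⊕ Fin g) ℝ (Fin g ⊕ Fin g → ℝ) :=
    (b₁.prod b₂).map (Submodule.prodEquivOfIsCompl Vm Vp hcompl)
  have hbl : ∀ j, (b (Sum.inl j)) ∈ Vm := by
    intro j
    have : b (Sum.inl j) = ↑(b₁ j) := by
      simp [b, Module.Basis.map_apply, Submodule.coe_prodEquivOfIsCompl',
        Module.Basis.prod_apply_inl_fst, Module.Basis.prod_apply_inl_snd]
    rw [this]; exact (b₁ j).2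
  have hbr : ∀ j, (b (Sum.inr j)) ∈ Vp := by
    intro j
    have : b (Sum.inr j) = ↑(b₂ j) := by
      simp [b, Module.Basis.map_apply, Submodule.coe_prodEquivOfIsCompl',
        Module.Basis.prod_apply_inr_fst, Module.Basis.prod_apply_inr_snd]
    rw [this]; exact (b₂ j).2
  have hAm : ∀ x ∈ Vm, A *ᵥ x = -x := by
    rintro x ⟨y, rfl⟩
    rw [Matrix.mulVecLin_apply, Matrix.mulVec_mulVec, hAp, Matrix.neg_mulVec]
  have hAModp : ∀ x ∈ Vp, A *ᵥ x = x := by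
    rintro x ⟨y, rfl⟩
    rw [Matrix.mulVecLin_apply, Matrix.mulVec_mulVec, hAq]
  -- the matrix
  let h₀ : Matrix (Fin g ⊕ Fin g) (Fin g ⊕ Fin g) ℝ := (Pi.basisFun ℝ _).toMatrix ⇑b
  have hunit : IsUnit h₀ := by
    have : Invertible h₀ := (Pi.basisFun ℝ (Fin g ⊕ Fin g)).invertibleToMatrix b
    exact isUnit_of_invertible h₀
  have hcol : ∀ j, (fun k => h₀ k j) = b j := by
    intro j; funext k
    simp [h₀, Module.Basis.toMatrix_apply, Pi.basisFun_repr]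
  refine ⟨h₀, hunit, ?_⟩
  ext i j
  rw [Matrix.mul_apply, Matrix.mul_apply]
  have lhs_eq : ∑ k, A i k * h₀ k j = (A *ᵥ (b j)) i := by
    rw [← hcol j]; rfl
  rw [lhs_eq]
  cases j with
  | inl j' =>
    have : ∑ k, h₀ i k * Istar g k (Sum.inl j') = -(h₀ i (Sum.inl j')) := by
      rw [Fintype.sum_sum_type]
      simp [Istar, Matrix.one_apply, mul_ite, Finset.sum_ite_eq']
    rw [this, hAm _ (hbl j')]
    have h2 := congrFun (hcol (Sum.inl j')) i
    simp only [Pi.neg_apply, ← h2]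
  | inr j' =>
    have : ∑ k, h₀ i k * Istar g k (Sum.inr j') = h₀ i (Sum.inr j') := by
      rw [Fintype.sum_sum_type]
      simp [Istar, Matrix.one_apply, mul_ite, Finset.sum_ite_eq']
    rw [this, hAModp _ (hbr j')]
    exact congrFun (hcol (Sum.inr j')) i



/-- `H¹(⟨τ⟩, Sp(2g,ℝ))` is trivial: every `M ∈ Sp(2g,ℝ)` with `τ(M)·M = I` can be
written `M = τ(h)·h⁻¹` for some `h ∈ Sp(2g,ℝ)`. -/
theorem stmt_19 (g : ℕ) (hg : 1 ≤ g)
    (M : Matrix (Fin g ⊕ Fin g) (Fin g ⊕ Fin g) ℝ)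
    (hM : Mᵀ * Jmat g * M = Jmat g)
    (hcoc : tauInv g M * M = 1) :
    ∃ h : Matrix (Fin g ⊕ Fin g) (Fin g ⊕ Fin g) ℝ,
      hᵀ * Jmat g * h = Jmat g ∧ M = tauInv g h * h⁻¹ := by
  set J := Jmat g with hJdef
  have hII : Istar g * Istar g = 1 := by
    simp [Istar, fromBlocks_multiply, ← fromBlocks_one]
  have hIT : (Istar g)ᵀ = Istar g := by
    simp [Istar, fromBlocks_transpose, transpose_neg, transpose_one]
  have hIJI : Istar g * J * Istar g = -J := by
    simp [Istar, hJdef, Jmat, fromBlocks_multiply, fromBlocks_neg]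
  have hJT : Jᵀ = -J := by
    simp [hJdef, Jmat, fromBlocks_transpose, fromBlocks_neg]
  have hJJ : J * J = -1 := by
    simp [hJdef, Jmat, fromBlocks_multiply, ← fromBlocks_one, fromBlocks_neg]
  set A := Istar g * M with hAdef
  have hA2 : A * A = 1 := by
    have := hcoc
    simp only [tauInv] at this
    calc A * A = Istar g * M * Istar g * M := by
          simp only [hAdef, Matrix.mul_assoc]
      _ = 1 := this
  have hAJA : Aᵀ * J * A = -J := by
    calc Aᵀ * J * A = Mᵀ * (Istar g * J * Istar g) * M := by
          simp only [hAdef, transpose_mul, hIT, Matrix.mul_assoc]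
      _ = Mᵀ * (-J) * M := by rw [hIJI]
      _ = -(Mᵀ * J * M) := by simp only [Matrix.mul_neg, Matrix.neg_mul]
      _ = -J := by rw [hM]
  have hBsym : (J * A)ᵀ = J * A := by
    have hAJ : Aᵀ * J = -(J * A) := by
      have h1 := congrArg (· * A) hAJA
      simp only [Matrix.mul_assoc, hA2, Matrix.mul_one, Matrix.neg_mul] at h1
      simpa [Matrix.mul_assoc] using h1
    rw [transpose_mul, hJT, Matrix.mul_neg, hAJ, neg_neg]
  -- trace A = 0
  have htr : Matrix.trace A = 0 := by
    have h1 : A = -J * (J * A) := by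
      rw [← Matrix.mul_assoc, Matrix.neg_mul, hJJ, neg_neg, Matrix.one_mul]
    have h2 : Matrix.trace (J * (J * A)) = - Matrix.trace (J * (J * A)) := by
      conv_lhs => rw [← Matrix.trace_transpose, transpose_mul, hBsym, hJT, Matrix.mul_neg,
        Matrix.trace_neg, Matrix.trace_mul_comm]
    have h3 : Matrix.trace (J * (J * A)) = 0 := by linarith
    rw [h1, Matrix.neg_mul, Matrix.trace_neg, h3, neg_zero]
  obtain ⟨h₀, hu, hint⟩ := exists_h0 g A hA2 htr
  have hh₀ : Invertible h₀ := hu.invertible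
  have hJinv : Invertible J := ⟨-J, by rw [Matrix.neg_mul, hJJ, neg_neg],
    by rw [Matrix.mul_neg, hJJ, neg_neg]⟩
  set K := h₀ᵀ * J * h₀ with hKdef
  have hKinv : Invertible K := by
    letI : Invertible h₀ᵀ := Matrix.invertibleTranspose h₀
    letI : Invertible (h₀ᵀ * J) := invertibleMul _ _
    exact invertibleMul _ _
  have hKI : Istar g * K * Istar g = -K := by
    calc Istar g * K * Istar g
        = (h₀ * Istar g)ᵀ * J * (h₀ * Istar g) := by
          simp only [hKdef, transpose_mul, hIT, Matrix.mul_assoc]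
      _ = (A * h₀)ᵀ * J * (A * h₀) := by rw [← hint]
      _ = h₀ᵀ * (Aᵀ * J * A) * h₀ := by
          simp only [transpose_mul, Matrix.mul_assoc]
      _ = -K := by rw [hAJA]; simp only [hKdef, Matrix.mul_neg, Matrix.neg_mul]
  have hKT : Kᵀ = -K := by
    calc Kᵀ = h₀ᵀ * Jᵀ * h₀ := by
          simp only [hKdef, transpose_mul, transpose_transpose, Matrix.mul_assoc]
      _ = -K := by rw [hJT]; simp only [hKdef, Matrix.mul_neg, Matrix.neg_mul]
  -- block structure of K
  set β := K.toBlocks₁₂ with hβdef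
  have hKblocks : K = fromBlocks (K.toBlocks₁₁) (K.toBlocks₁₂) (K.toBlocks₂₁) (K.toBlocks₂₂) :=
    (fromBlocks_toBlocks K).symm
  have hK11 : K.toBlocks₁₁ = 0 := by
    have h1 : ∀ i j, (Istar g * K * Istar g) (Sum.inl i) (Sum.inl j) = K (Sum.inl i) (Sum.inl j) := by
      intro i j
      rw [hKblocks]
      simp [Istar, fromBlocks_multiply, fromBlocks_apply₁₁]
    ext i j
    have h2 := h1 i j
    rw [hKI] at h2
    simp only [Matrix.neg_apply] at h2
    have : (2:ℝ) * K (Sum.inl i) (Sum.inl j) = 0 := by linarith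
    have h3 : K (Sum.inl i) (Sum.inl j) = 0 := by linarith
    simpa [Matrix.toBlocks₁₁] using h3
  have hK22 : K.toBlocks₂₂ = 0 := by
    have h1 : ∀ i j, (Istar g * K * Istar g) (Sum.inr i) (Sum.inr j) = K (Sum.inr i) (Sum.inr j) := by
      intro i j
      rw [hKblocks]
      simp [Istar, fromBlocks_multiply, fromBlocks_apply₂₂]
    ext i j
    have h2 := h1 i j
    rw [hKI] at h2
    simp only [Matrix.neg_apply] at h2
    have h3 : K (Sum.inr i) (Sum.inr j) = 0 := by linarith
    simpa [Matrix.toBlocks₂₂] using h3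
  have hK21 : K.toBlocks₂₁ = -βᵀ := by
    ext i j
    have h2 : Kᵀ (Sum.inl j) (Sum.inr i) = (-K) (Sum.inl j) (Sum.inr i) := by rw [hKT]
    simp only [Matrix.transpose_apply, Matrix.neg_apply] at h2
    simp only [Matrix.toBlocks₂₁, Matrix.neg_apply, Matrix.transpose_apply, hβdef,
      Matrix.toBlocks₁₂, Matrix.of_apply]
    linarith
  have hKform : K = fromBlocks 0 β (-βᵀ) 0 := by
    rw [hKblocks, hK11, hK22, hK21, hβdef]
  -- β is invertible
  have hβunit : IsUnit β := by
    rw [← Matrix.mulVec_injective_iff_isUnit]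
    have hker : ∀ x, β *ᵥ x = 0 → x = 0 := by
      intro x hx
      have hv : K *ᵥ (Sum.elim 0 x) = 0 := by
        rw [hKform, fromBlocks_mulVec]
        simp [hx]
      have hinj := Matrix.mulVec_injective_of_invertible K
      have : Sum.elim (0 : Fin g → ℝ) x = 0 := by
        apply hinj
        rw [hv, Matrix.mulVec_zero]
      funext i
      exact congrFun this (Sum.inr i)
    intro x y hxy
    have : β *ᵥ (x - y) = 0 := by rw [Matrix.mulVec_sub, hxy, sub_self]
    have := hker _ this
    exact sub_eq_zero.mp this
  have hβinv : Invertible β := β.invertibleOfIsUnitDet ((Matrix.isUnit_iff_isUnit_det β).mp hβunit)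
  have hβ1 : β * β⁻¹ = 1 := Matrix.mul_nonsing_inv β ((Matrix.isUnit_iff_isUnit_det β).mp hβunit)
  have hβ2 : β⁻¹ * β = 1 := Matrix.nonsing_inv_mul β ((Matrix.isUnit_iff_isUnit_det β).mp hβunit)
  set k : Matrix (Fin g ⊕ Fin g) (Fin g ⊕ Fin g) ℝ := fromBlocks 1 0 0 β⁻¹ with hkdef
  have hkinv : Invertible k := by
    refine ⟨fromBlocks 1 0 0 β, ?_, ?_⟩ <;>
      simp [hkdef, fromBlocks_multiply, hβ1, hβ2, ← fromBlocks_one]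
  have hkI : Istar g * k = k * Istar g := by
    simp [hkdef, Istar, fromBlocks_multiply]
  have hKkk : kᵀ * K * k = J := by
    have e1 : kᵀ * K = fromBlocks 0 β (-1) 0 := by
      rw [hKform, hkdef]
      simp only [fromBlocks_transpose, transpose_one, transpose_zero, fromBlocks_multiply]
      have h5 : (β⁻¹)ᵀ * (-βᵀ) = -1 := by
        rw [Matrix.mul_neg, ← transpose_mul, hβ1, transpose_one]
      simp [h5]
    rw [e1, hkdef, hJdef, Jmat]
    simp [fromBlocks_multiply, hβ1]
  set h := h₀ * k with hhdef
  have hhinv : Invertible h := invertibleMul h₀ k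
  have hsymp : hᵀ * J * h = J := by
    calc hᵀ * J * h = kᵀ * (h₀ᵀ * J * h₀) * k := by
          simp only [hhdef, transpose_mul, Matrix.mul_assoc]
      _ = J := by rw [← hKdef, hKkk]
  refine ⟨h, hsymp, ?_⟩
  have hAh : A * h = h * Istar g := by
    calc A * h = (A * h₀) * k := by rw [hhdef, ← Matrix.mul_assoc]
      _ = (h₀ * Istar g) * k := by rw [hint]
      _ = h₀ * (k * Istar g) := by rw [Matrix.mul_assoc, hkI]
      _ = h * Istar g := by rw [hhdef, Matrix.mul_assoc]
  have hMIA : M = Istar g * A := by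
    rw [hAdef, ← Matrix.mul_assoc, hII, Matrix.one_mul]
  have hMh : M * h = Istar g * h * Istar g := by
    rw [hMIA, Matrix.mul_assoc, hAh, ← Matrix.mul_assoc]
  have hinv_eq : h⁻¹ = ⅟h := (Matrix.invOf_eq_nonsing_inv h).symm
  rw [tauInv, hinv_eq, ← hMh, Matrix.mul_assoc, mul_invOf_self, Matrix.mul_one]
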